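/- Let (C, R) be a SCoRa dataset over A entities with embedding x ∈ ℝ^{D×A}, root laws f and g, and prior variances σ_β², σ_0² > 0. Define the augmented embedding x̃ ∈ ℝ^{(D+1)×(A+1)} by x̃_a = (x_a, 0) for a ∈ {1,…,A} and x̃_{A+1} = (0,…,0,1), the covariance Σ̃ = Diag(σ_β², …, σ_β², σ_0²) ∈ ℝ^{(D+1)×(D+1)}, and the flexible-GBT dataset D̃ obtained by mapping each comparison (b, c, r) ∈ C to the tuple (b, c, r, f) and each rating (a, t) ∈ R to the tuple (a, A+1, t, g). Then for every β ∈ ℝ^D and θ_0 ∈ ℝ, the flexible-GBT negative log-posterior of β̃ = (β, θ_0) ∈ ℝ^{D+1} with embedding x̃ and covariance Σ̃ on the dataset D̃ equals the SCoRa negative log-posterior: L_FGBT(β̃ | D̃) = L_SCoRa(β, θ_0 | C, R). -/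

import Mathlib

open MeasureTheory RealInnerProductSpace

noncomputable section

/-- The cumulant generating function `Φ_μ(θ) = log ∫ exp(θ r) dμ(r)` of a measure `μ` on `ℝ`. -/
def cgfm (μ : Measure ℝ) (θ : ℝ) : ℝ := Real.log (∫ r, Real.exp (θ * r) ∂μ)

/-- `μ` has finite exponential moments: `∫ exp(θ r) dμ(r) < ∞` for every `θ`. -/
def HasExpMoments (μ : Measure ℝ) : Prop :=
  ∀ θ : ℝ, Integrable (fun r => Real.exp (θ * r)) μ

/-- The SCoRa negative log-posterior `L(β, θ0 | D)` for a dataset consisting of a multiset `C`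
of comparisons `(b, c, r)` and a multiset `Rt` of ratings `(a, t)`, with embedding columns
`x a ∈ ℝ^D`, comparison root law `f`, rating root law `g`, and prior variances `sb2 = σ_β²`,
`s02 = σ_0²`. -/
def scoraLoss {Dd A : ℕ} (x : Fin A → EuclideanSpace ℝ (Fin Dd))
    (f g : Measure ℝ) (sb2 s02 : ℝ)
    (C : Multiset (Fin A × Fin A × ℝ)) (Rt : Multiset (Fin A × ℝ))
    (β : EuclideanSpace ℝ (Fin Dd)) (θ0 : ℝ) : ℝ :=
  ‖β‖ ^ 2 / (2 * sb2) + θ0 ^ 2 / (2 * s02)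
    + (C.map (fun q =>
        cgfm f ⟪x q.1 - x q.2.1, β⟫ - q.2.2 * ⟪x q.1 - x q.2.1, β⟫)).sum
    + (Rt.map (fun q =>
        cgfm g (⟪x q.1, β⟫ - θ0) - q.2 * (⟪x q.1, β⟫ - θ0))).sum

/-- The quadratic form `v ↦ vᵀ M v`. -/
def quadForm {n : ℕ} (M : Matrix (Fin n) (Fin n) ℝ) (v : EuclideanSpace ℝ (Fin n)) : ℝ :=
  ∑ i, ∑ j, v i * M i j * v j

/-- The flexible-GBT negative log-posterior `L(β | D)` for a dataset `data` consisting of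
comparisons `(a, b, r, f)` (entities `a, b`, value `r`, root law `f`), with embedding columns
`x a ∈ ℝ^D` and prior covariance matrix `S = Σ_β`. -/
def fgbtLoss {Dd A : ℕ} (x : Fin A → EuclideanSpace ℝ (Fin Dd))
    (S : Matrix (Fin Dd) (Fin Dd) ℝ)
    (data : Multiset (Fin A × Fin A × ℝ × Measure ℝ))
    (β : EuclideanSpace ℝ (Fin Dd)) : ℝ :=
  (1 / 2) * quadForm S⁻¹ β
    + (data.map (fun q =>
        cgfm q.2.2.2 ⟪x q.1 - x q.2.1, β⟫ - q.2.2.1 * ⟪x q.1 - x q.2.1, β⟫)).sum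

/-- The augmented embedding `x̃ ∈ ℝ^{(D+1)×(A+1)}`: `x̃_a = (x_a, 0)` for `a ∈ {1,…,A}` and
`x̃_{A+1} = (0,…,0,1)`. -/
def augEmb {Dd A : ℕ} (x : Fin A → EuclideanSpace ℝ (Fin Dd)) :
    Fin (A + 1) → EuclideanSpace ℝ (Fin (Dd + 1)) :=
  Fin.snoc (fun a => WithLp.toLp 2 (Fin.snoc (WithLp.ofLp (x a)) 0))
    (WithLp.toLp 2 (Fin.snoc (WithLp.ofLp (0 : EuclideanSpace ℝ (Fin Dd))) 1))

lemma snoc_sub_aux {Dd : ℕ} (v w : EuclideanSpace ℝ (Fin Dd)) (a b : ℝ) :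
    (WithLp.toLp 2 (Fin.snoc (WithLp.ofLp v) a) : EuclideanSpace ℝ (Fin (Dd+1)))
      - WithLp.toLp 2 (Fin.snoc (WithLp.ofLp w) b)
      = WithLp.toLp 2 (Fin.snoc (WithLp.ofLp (v - w)) (a - b)) := by
  ext i
  induction i using Fin.lastCases with
  | last => simp [PiLp.sub_apply]
  | cast i => simp [PiLp.sub_apply]

lemma inner_snoc_aux {Dd : ℕ} (v w : EuclideanSpace ℝ (Fin Dd)) (a b : ℝ) :
    @inner ℝ (EuclideanSpace ℝ (Fin (Dd+1))) _ (WithLp.toLp 2 (Fin.snoc (WithLp.ofLp v) a))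
      (WithLp.toLp 2 (Fin.snoc (WithLp.ofLp w) b)) = ⟪v, w⟫ + a * b := by
  simp [PiLp.inner_apply, Fin.sum_univ_castSucc]
  ring

lemma quad_diag_aux {n : ℕ} (d : Fin n → ℝ) (hd : ∀ i, d i ≠ 0) (v : EuclideanSpace ℝ (Fin n)) :
    quadForm (Matrix.diagonal d)⁻¹ v = ∑ i, v i * (d i)⁻¹ * v i := by
  have h : (Matrix.diagonal d)⁻¹ = Matrix.diagonal (fun i => (d i)⁻¹) := by
    apply Matrix.inv_eq_right_inv
    rw [Matrix.diagonal_mul_diagonal]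
    rw [show (fun i => d i * (d i)⁻¹) = fun _ => (1:ℝ) from funext fun i => mul_inv_cancel₀ (hd i),
      Matrix.diagonal_one]
  rw [quadForm, h]
  refine Finset.sum_congr rfl fun i _ => ?_
  rw [Finset.sum_eq_single i]
  · simp
  · intro b _ hb; simp [Matrix.diagonal_apply_ne' _ hb]
  · simp

/-- with the augmented embedding `x̃`, the diagonal covariance
`Σ̃ = Diag(σ_β², …, σ_β², σ_0²)`, and the flexible-GBT dataset obtained by mapping each
comparison `(b, c, r)` to `(b, c, r, f)` and each rating `(a, t)` to `(a, A+1, t, g)`,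
the flexible-GBT negative log-posterior of `β̃ = (β, θ0)` equals the SCoRa negative
log-posterior of `(β, θ0)`. -/
theorem scora_is_flexible_gbt
    {Dd A : ℕ} (x : Fin A → EuclideanSpace ℝ (Fin Dd))
    (f g : Measure ℝ) [IsProbabilityMeasure f] [IsProbabilityMeasure g]
    (hf : HasExpMoments f) (hg : HasExpMoments g)
    (sb2 s02 : ℝ) (hsb : 0 < sb2) (hs0 : 0 < s02)
    (C : Multiset (Fin A × Fin A × ℝ)) (Rt : Multiset (Fin A × ℝ))
    (β : EuclideanSpace ℝ (Fin Dd)) (θ0 : ℝ) :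
    fgbtLoss (augEmb x) (Matrix.diagonal (Fin.snoc (fun _ : Fin Dd => sb2) s02))
      (C.map (fun q => (Fin.castSucc q.1, Fin.castSucc q.2.1, q.2.2, f))
        + Rt.map (fun q => (Fin.castSucc q.1, Fin.last A, q.2, g)))
      (WithLp.toLp 2 (Fin.snoc (WithLp.ofLp β) θ0))
      = scoraLoss x f g sb2 s02 C Rt β θ0 := by
  unfold fgbtLoss scoraLoss
  rw [Multiset.map_add, Multiset.sum_add, Multiset.map_map, Multiset.map_map]
  simp only [Function.comp_def]
  have hquad : (1 / 2 : ℝ) * quadForm (Matrix.diagonal (Fin.snoc (fun _ : Fin Dd => sb2) s02))⁻¹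
      (WithLp.toLp 2 (Fin.snoc (WithLp.ofLp β) θ0)) = ‖β‖ ^ 2 / (2 * sb2) + θ0 ^ 2 / (2 * s02) := by
    rw [quad_diag_aux _ (fun i => by
      induction i using Fin.lastCases with
      | last => simpa using hs0.ne'
      | cast i => simpa using hsb.ne')]
    have hnorm : ‖β‖ ^ 2 = ∑ i, β i * β i := by
      rw [EuclideanSpace.norm_sq_eq]; simp [Real.norm_eq_abs, sq_abs, sq]
    rw [Fin.sum_univ_castSucc]
    simp only [PiLp.toLp_apply, Fin.snoc_castSucc, Fin.snoc_last, hnorm, Finset.sum_div, Finset.mul_sum]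
    rw [mul_add, Finset.mul_sum]
    congr 1
    · refine Finset.sum_congr rfl fun i _ => ?_
      field_simp
      try ring
    · field_simp
      try ring
  have hC : ∀ q ∈ C, (fun q : Fin A × Fin A × ℝ =>
        cgfm f ⟪augEmb x (Fin.castSucc q.1) - augEmb x (Fin.castSucc q.2.1), WithLp.toLp 2 (Fin.snoc (WithLp.ofLp β) θ0)⟫
          - q.2.2 * ⟪augEmb x (Fin.castSucc q.1) - augEmb x (Fin.castSucc q.2.1), WithLp.toLp 2 (Fin.snoc (WithLp.ofLp β) θ0)⟫) q
      = (fun q : Fin A × Fin A × ℝ =>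
        cgfm f ⟪x q.1 - x q.2.1, β⟫ - q.2.2 * ⟪x q.1 - x q.2.1, β⟫) q := by
    intro q _
    have h1 : augEmb x (Fin.castSucc q.1) - augEmb x (Fin.castSucc q.2.1)
        = (WithLp.toLp 2 (Fin.snoc (WithLp.ofLp (x q.1 - x q.2.1)) 0) : EuclideanSpace ℝ (Fin (Dd+1))) := by
      simp only [augEmb, Fin.snoc_castSucc]
      rw [snoc_sub_aux]; norm_num
    have h2 : ⟪augEmb x (Fin.castSucc q.1) - augEmb x (Fin.castSucc q.2.1), WithLp.toLp 2 (Fin.snoc (WithLp.ofLp β) θ0)⟫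
        = ⟪x q.1 - x q.2.1, β⟫ := by
      rw [h1, inner_snoc_aux]; ring
    simp only [h2]
  have hR : ∀ q ∈ Rt, (fun q : Fin A × ℝ =>
        cgfm g ⟪augEmb x (Fin.castSucc q.1) - augEmb x (Fin.last A), WithLp.toLp 2 (Fin.snoc (WithLp.ofLp β) θ0)⟫
          - q.2 * ⟪augEmb x (Fin.castSucc q.1) - augEmb x (Fin.last A), WithLp.toLp 2 (Fin.snoc (WithLp.ofLp β) θ0)⟫) q
      = (fun q : Fin A × ℝ =>
        cgfm g (⟪x q.1, β⟫ - θ0) - q.2 * (⟪x q.1, β⟫ - θ0)) q := by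
    intro q _
    have h1 : augEmb x (Fin.castSucc q.1) - augEmb x (Fin.last A)
        = (WithLp.toLp 2 (Fin.snoc (WithLp.ofLp ((x q.1) - (0 : EuclideanSpace ℝ (Fin Dd)))) (0 - 1))
            : EuclideanSpace ℝ (Fin (Dd+1))) := by
      simp only [augEmb, Fin.snoc_castSucc, Fin.snoc_last]
      rw [snoc_sub_aux]
    have h2 : ⟪augEmb x (Fin.castSucc q.1) - augEmb x (Fin.last A), WithLp.toLp 2 (Fin.snoc (WithLp.ofLp β) θ0)⟫
        = ⟪x q.1, β⟫ - θ0 := by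
      rw [h1, inner_snoc_aux, sub_zero]; ring
    simp only [h2]
  rw [Multiset.map_congr rfl hC, Multiset.map_congr rfl hR, hquad]
  ring

end
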